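/- The boundary value problem u'''(t) = -(1/36)(u'(t))² + (1/24)u(t)u''(t) + t²/4 - 6 on (0,1) with u(0)=u'(0)=u''(1)=0 has a unique solution with 0 ≤ u(t) ≤ 2.5, 0 ≤ u'(t) ≤ 3.75, |u''(t)| ≤ 7.5 on [0,1]. -/

import Mathlib

/-- `u` solves the ODE of Example 4.2.1 on `(0,1)` with `u(0)=u'(0)=u''(1)=0`. -/
def IsSolution (u : ℝ → ℝ) : Prop :=
  ContDiff ℝ 2 u ∧
  (∀ t ∈ Set.Ioo (0:ℝ) 1,
    HasDerivAt (deriv (deriv u))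
      (-(1 / 36) * (deriv u t) ^ 2 + (1 / 24) * u t * deriv (deriv u) t +
        t ^ 2 / 4 - 6) t) ∧
  u 0 = 0 ∧ deriv u 0 = 0 ∧ deriv (deriv u) 1 = 0

/-- bounds of Example 4.2.1. -/
def InBounds (u : ℝ → ℝ) : Prop :=
  ∀ t ∈ Set.Icc (0:ℝ) 1,
    u t ∈ Set.Icc 0 (2.5 : ℝ) ∧ deriv u t ∈ Set.Icc 0 (3.75 : ℝ) ∧
      |deriv (deriv u) t| ≤ (7.5 : ℝ)

open Set

noncomputable def exSol : ℝ → ℝ := fun t => 3 * t ^ 2 - t ^ 3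

lemma exSol_hd1 (t : ℝ) : HasDerivAt exSol (6 * t - 3 * t ^ 2) t := by
  have h := ((hasDerivAt_pow 2 t).const_mul 3).sub (hasDerivAt_pow 3 t)
  unfold exSol
  simpa [exSol, Pi.sub_def] using h.congr_deriv (by ring)

lemma exSol_d1 : deriv exSol = fun t => 6 * t - 3 * t ^ 2 := funext fun t => (exSol_hd1 t).deriv

lemma exSol_hd2 (t : ℝ) : HasDerivAt (deriv exSol) (6 - 6 * t) t := by
  rw [exSol_d1]
  have h := ((hasDerivAt_id t).const_mul 6).sub ((hasDerivAt_pow 2 t).const_mul 3)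
  simpa [Pi.sub_def] using h.congr_deriv (by ring)

lemma exSol_d2 : deriv (deriv exSol) = fun t => 6 - 6 * t := funext fun t => (exSol_hd2 t).deriv

lemma exSol_hd3 (t : ℝ) : HasDerivAt (deriv (deriv exSol)) (-6) t := by
  rw [exSol_d2]
  have h := (hasDerivAt_const t (6:ℝ)).sub ((hasDerivAt_id t).const_mul 6)
  simpa [Pi.sub_def] using h.congr_deriv (by ring)

lemma exSol_isSolution : IsSolution exSol := by
  refine ⟨by unfold exSol; fun_prop, ?_, by simp [exSol], by simp [exSol_d1], by simp [exSol_d2]⟩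
  intro t ht
  have h := exSol_hd3 t
  have e : (-6 : ℝ) = -(1 / 36) * (deriv exSol t) ^ 2 + (1 / 24) * exSol t * deriv (deriv exSol) t
      + t ^ 2 / 4 - 6 := by
    rw [exSol_d2, exSol_d1]; simp only [exSol]; ring
  rwa [e] at h

lemma exSol_inBounds : InBounds exSol := by
  intro t ht
  obtain ⟨h0, h1⟩ := ht
  refine ⟨⟨?_, ?_⟩, ⟨?_, ?_⟩, ?_⟩
  · simp only [exSol]; nlinarith
  · simp only [exSol]; nlinarith
  · simp only [exSol_d1]; nlinarith
  · simp only [exSol_d1]; nlinarith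
  · simp only [exSol_d2]
    rw [abs_le]; constructor <;> [simp; skip] <;> nlinarith

lemma abs_mul_le' {x y C D : ℝ} (hx : |x| ≤ C) (hy : |y| ≤ D) : |x * y| ≤ C * D := by
  rw [abs_mul]
  exact mul_le_mul hx hy (abs_nonneg y) (le_trans (abs_nonneg x) hx)

lemma unique_aux {u v : ℝ → ℝ} (hu : IsSolution u) (hub : InBounds u)
    (hv : IsSolution v) (hvb : InBounds v) : ∀ t ∈ Icc (0:ℝ) 1, v t = u t := by
  obtain ⟨hucd, huode, hu0, hu0', hu1''⟩ := hu
  obtain ⟨hvcd, hvode, hv0, hv0', hv1''⟩ := hv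
  set w := fun t => v t - u t with hwdef
  have hu2 : ContDiff ℝ (1+1) u := by norm_num; exact hucd
  have hv2 : ContDiff ℝ (1+1) v := by norm_num; exact hvcd
  have hud1 : ContDiff ℝ 1 (deriv u) := (contDiff_succ_iff_deriv.mp hu2).2.2
  have hvd1 : ContDiff ℝ 1 (deriv v) := (contDiff_succ_iff_deriv.mp hv2).2.2
  have hudiff : Differentiable ℝ u := hucd.differentiable (by norm_num)
  have hvdiff : Differentiable ℝ v := hvcd.differentiable (by norm_num)
  have hudd : Differentiable ℝ (deriv u) := hud1.differentiable (by norm_num)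
  have hvdd : Differentiable ℝ (deriv v) := hvd1.differentiable (by norm_num)
  have hdw : deriv w = fun t => deriv v t - deriv u t :=
    funext fun t => deriv_sub (hvdiff t) (hudiff t)
  have hddw : deriv (deriv w) = fun t => deriv (deriv v) t - deriv (deriv u) t := by
    rw [hdw]; exact funext fun t => deriv_sub (hvdd t) (hudd t)
  have hcont : Continuous (deriv (deriv w)) := by
    rw [hddw]
    exact (hvd1.continuous_deriv le_rfl).sub (hud1.continuous_deriv le_rfl)
  -- max of |w''| on Icc
  obtain ⟨t₀, ht₀, hmax⟩ := isCompact_Icc.exists_isMaxOn (nonempty_Icc.mpr zero_le_one)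
    (hcont.abs.continuousOn (s := Icc (0:ℝ) 1))
  set M := |deriv (deriv w) t₀| with hMdef
  have hM0 : 0 ≤ M := abs_nonneg _
  have hMb : ∀ t ∈ Icc (0:ℝ) 1, |deriv (deriv w) t| ≤ M := fun t ht => hmax ht
  -- boundary values of w
  have hw0 : w 0 = 0 := by simp [hwdef, hv0, hu0]
  have hw'0 : deriv w 0 = 0 := by rw [hdw]; simp [hv0', hu0']
  have hw''1 : deriv (deriv w) 1 = 0 := by rw [hddw]; simp [hv1'', hu1'']
  -- |w'| ≤ M on Icc
  have hw'd : ∀ t : ℝ, HasDerivAt (deriv w) (deriv (deriv w) t) t := by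
    intro t
    rw [hddw, hdw]
    exact ((hvdd t).hasDerivAt.sub (hudd t).hasDerivAt)
  have hbw' : ∀ t ∈ Icc (0:ℝ) 1, |deriv w t| ≤ M := by
    intro t ht
    have h := Convex.norm_image_sub_le_of_norm_hasDerivWithin_le
      (f := deriv w) (f' := deriv (deriv w)) (s := Icc (0:ℝ) 1) (C := M)
      (fun x hx => (hw'd x).hasDerivWithinAt)
      (fun x hx => by rw [Real.norm_eq_abs]; exact hMb x hx)
      (convex_Icc 0 1) (left_mem_Icc.mpr zero_le_one) ht
    rw [hw'0, sub_zero, sub_zero, Real.norm_eq_abs, Real.norm_eq_abs] at h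
    calc |deriv w t| ≤ M * |t| := h
      _ ≤ M * 1 := by
          apply mul_le_mul_of_nonneg_left _ hM0
          rw [abs_le]; constructor <;> linarith [ht.1, ht.2]
      _ = M := mul_one M
  -- |w| ≤ M on Icc
  have hwd : ∀ t : ℝ, HasDerivAt w (deriv w t) t := by
    intro t
    rw [hdw]
    exact ((hvdiff t).hasDerivAt.sub (hudiff t).hasDerivAt)
  have hbw : ∀ t ∈ Icc (0:ℝ) 1, |w t| ≤ M := by
    intro t ht
    have h := Convex.norm_image_sub_le_of_norm_hasDerivWithin_le
      (f := w) (f' := deriv w) (s := Icc (0:ℝ) 1) (C := M)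
      (fun x hx => (hwd x).hasDerivWithinAt)
      (fun x hx => by rw [Real.norm_eq_abs]; exact hbw' x hx)
      (convex_Icc 0 1) (left_mem_Icc.mpr zero_le_one) ht
    rw [hw0, sub_zero, sub_zero, Real.norm_eq_abs, Real.norm_eq_abs] at h
    calc |w t| ≤ M * |t| := h
      _ ≤ M * 1 := by
          apply mul_le_mul_of_nonneg_left _ hM0
          rw [abs_le]; constructor <;> linarith [ht.1, ht.2]
      _ = M := mul_one M
  -- third derivative of w on Ioo, with bound 5/8 M
  have hw3 : ∀ t ∈ Ioo (0:ℝ) 1, HasDerivAt (deriv (deriv w))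
      ((-(1 / 36) * (deriv v t) ^ 2 + (1 / 24) * v t * deriv (deriv v) t + t ^ 2 / 4 - 6)
        - (-(1 / 36) * (deriv u t) ^ 2 + (1 / 24) * u t * deriv (deriv u) t + t ^ 2 / 4 - 6)) t := by
    intro t ht
    rw [hddw]
    exact (hvode t ht).sub (huode t ht)
  have hw3b : ∀ t ∈ Ioo (0:ℝ) 1,
      |(-(1 / 36) * (deriv v t) ^ 2 + (1 / 24) * v t * deriv (deriv v) t + t ^ 2 / 4 - 6)
        - (-(1 / 36) * (deriv u t) ^ 2 + (1 / 24) * u t * deriv (deriv u) t + t ^ 2 / 4 - 6)|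
        ≤ 5 / 8 * M := by
    intro t ht
    have htI : t ∈ Icc (0:ℝ) 1 := ⟨le_of_lt ht.1, le_of_lt ht.2⟩
    obtain ⟨hu1, hu2', hu3⟩ := hub t htI
    obtain ⟨hv1, hv2', hv3⟩ := hvb t htI
    have ha : |w t| ≤ M := hbw t htI
    have hb : |deriv w t| ≤ M := hbw' t htI
    have hc : |deriv (deriv w) t| ≤ M := hMb t htI
    have e : (-(1 / 36) * (deriv v t) ^ 2 + (1 / 24) * v t * deriv (deriv v) t + t ^ 2 / 4 - 6)
        - (-(1 / 36) * (deriv u t) ^ 2 + (1 / 24) * u t * deriv (deriv u) t + t ^ 2 / 4 - 6)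
        = -((1 / 36) * ((deriv v t + deriv u t) * deriv w t))
          + (1 / 24) * (v t * deriv (deriv w) t)
          + (1 / 24) * (w t * deriv (deriv u) t) := by
      rw [hddw, hdw]; simp only [hwdef]; ring
    rw [e]
    have h1 : |(1 / 36 : ℝ) * ((deriv v t + deriv u t) * deriv w t)| ≤ 1 / 36 * (7.5 * M) := by
      rw [abs_mul]
      have : |(deriv v t + deriv u t) * deriv w t| ≤ 7.5 * M :=
        abs_mul_le' (by rw [abs_le]; constructor <;>
          [linarith [hv2'.1, hu2'.1]; linarith [hv2'.2, hu2'.2]]) hb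
      calc |(1/36 : ℝ)| * |(deriv v t + deriv u t) * deriv w t|
          ≤ |(1/36 : ℝ)| * (7.5 * M) := by
            exact mul_le_mul_of_nonneg_left this (abs_nonneg _)
        _ = 1/36 * (7.5 * M) := by rw [abs_of_pos]; norm_num
    have h2 : |(1 / 24 : ℝ) * (v t * deriv (deriv w) t)| ≤ 1 / 24 * (2.5 * M) := by
      rw [abs_mul]
      have : |v t * deriv (deriv w) t| ≤ 2.5 * M :=
        abs_mul_le' (by rw [abs_le]; constructor <;> [linarith [hv1.1]; linarith [hv1.2]]) hc
      calc |(1/24 : ℝ)| * |v t * deriv (deriv w) t|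
          ≤ |(1/24 : ℝ)| * (2.5 * M) := mul_le_mul_of_nonneg_left this (abs_nonneg _)
        _ = 1/24 * (2.5 * M) := by rw [abs_of_pos]; norm_num
    have h3 : |(1 / 24 : ℝ) * (w t * deriv (deriv u) t)| ≤ 1 / 24 * (M * 7.5) := by
      rw [abs_mul]
      have : |w t * deriv (deriv u) t| ≤ M * 7.5 := abs_mul_le' ha hu3
      calc |(1/24 : ℝ)| * |w t * deriv (deriv u) t|
          ≤ |(1/24 : ℝ)| * (M * 7.5) := mul_le_mul_of_nonneg_left this (abs_nonneg _)
        _ = 1/24 * (M * 7.5) := by rw [abs_of_pos]; norm_num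
    calc |(-((1 / 36) * ((deriv v t + deriv u t) * deriv w t))
          + (1 / 24) * (v t * deriv (deriv w) t)
          + (1 / 24) * (w t * deriv (deriv u) t))|
        ≤ |(-((1 / 36) * ((deriv v t + deriv u t) * deriv w t))
          + (1 / 24) * (v t * deriv (deriv w) t))| + |(1 / 24) * (w t * deriv (deriv u) t)| :=
          abs_add_le _ _
      _ ≤ |(-((1 / 36) * ((deriv v t + deriv u t) * deriv w t)))|
          + |(1 / 24) * (v t * deriv (deriv w) t)| + |(1 / 24) * (w t * deriv (deriv u) t)| := by
          linarith [abs_add_le (-((1 / 36 : ℝ) * ((deriv v t + deriv u t) * deriv w t)))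
            ((1 / 24) * (v t * deriv (deriv w) t))]
      _ ≤ 1 / 36 * (7.5 * M) + 1 / 24 * (2.5 * M) + 1 / 24 * (M * 7.5) := by
          rw [abs_neg]; linarith
      _ = 5 / 8 * M := by ring
  -- Lipschitz estimate for w'' on Ioo, extended to Icc by closure
  have hlip : ∀ x ∈ Ioo (0:ℝ) 1, ∀ y ∈ Ioo (0:ℝ) 1,
      |deriv (deriv w) y - deriv (deriv w) x| ≤ 5 / 8 * M * |y - x| := by
    intro x hx y hy
    have h := Convex.norm_image_sub_le_of_norm_hasDerivWithin_le
      (f := deriv (deriv w))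
      (f' := fun t => (-(1 / 36) * (deriv v t) ^ 2 + (1 / 24) * v t * deriv (deriv v) t + t ^ 2 / 4 - 6)
        - (-(1 / 36) * (deriv u t) ^ 2 + (1 / 24) * u t * deriv (deriv u) t + t ^ 2 / 4 - 6))
      (s := Ioo (0:ℝ) 1) (C := 5 / 8 * M)
      (fun z hz => (hw3 z hz).hasDerivWithinAt)
      (fun z hz => by rw [Real.norm_eq_abs]; exact hw3b z hz)
      (convex_Ioo 0 1) hx hy
    rw [Real.norm_eq_abs, Real.norm_eq_abs] at h
    exact h
  have hlipIcc : ∀ x ∈ Icc (0:ℝ) 1, ∀ y ∈ Icc (0:ℝ) 1,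
      |deriv (deriv w) y - deriv (deriv w) x| ≤ 5 / 8 * M * |y - x| := by
    have hclosed : IsClosed {p : ℝ × ℝ |
        |deriv (deriv w) p.2 - deriv (deriv w) p.1| ≤ 5 / 8 * M * |p.2 - p.1|} := by
      apply isClosed_le
      · exact ((hcont.comp continuous_snd).sub (hcont.comp continuous_fst)).abs
      · exact (continuous_const.mul (continuous_snd.sub continuous_fst).abs)
    have hsub : (Icc (0:ℝ) 1 ×ˢ Icc (0:ℝ) 1 : Set (ℝ × ℝ)) ⊆ {p : ℝ × ℝ |
        |deriv (deriv w) p.2 - deriv (deriv w) p.1| ≤ 5 / 8 * M * |p.2 - p.1|} := by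
      have heq : (Icc (0:ℝ) 1 ×ˢ Icc (0:ℝ) 1 : Set (ℝ × ℝ))
          = closure (Ioo (0:ℝ) 1 ×ˢ Ioo (0:ℝ) 1) := by
        rw [closure_prod_eq, closure_Ioo (by norm_num : (0:ℝ) ≠ 1)]
      rw [heq]
      apply closure_minimal _ hclosed
      rintro ⟨x, y⟩ ⟨hx, hy⟩
      exact hlip x hx y hy
    intro x hx y hy
    exact hsub (Set.mk_mem_prod hx hy)
  -- contraction: M ≤ 5/8 M hence M = 0
  have hMz : M = 0 := by
    have h := hlipIcc 1 (right_mem_Icc.mpr zero_le_one) t₀ ht₀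
    rw [hw''1, sub_zero] at h
    have h2 : |t₀ - 1| ≤ 1 := by
      rw [abs_le]; constructor <;> linarith [ht₀.1, ht₀.2]
    have : M ≤ 5 / 8 * M := by
      calc M = |deriv (deriv w) t₀| := hMdef
        _ ≤ 5 / 8 * M * |t₀ - 1| := h
        _ ≤ 5 / 8 * M * 1 := mul_le_mul_of_nonneg_left h2 (by positivity)
        _ = 5 / 8 * M := mul_one _
    linarith
  -- conclude
  intro t ht
  have := hbw t ht
  rw [hMz] at this
  have : w t = 0 := abs_nonpos_iff.mp this
  simpa [hwdef, sub_eq_zero] using this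


theorem example_421 :
    ∃ u : ℝ → ℝ, (IsSolution u ∧ InBounds u) ∧
      ∀ v : ℝ → ℝ, IsSolution v ∧ InBounds v → ∀ t ∈ Set.Icc (0:ℝ) 1, v t = u t := by
  exact ⟨exSol, ⟨exSol_isSolution, exSol_inBounds⟩,
    fun v hv => unique_aux exSol_isSolution exSol_inBounds hv.1 hv.2⟩
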